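/- Let η > 0 and T ≥ 1 be such that (T+1)η ≥ 1, set α = 1/((T+1)η) (so 0 < α ≤ 1), and let f(x) = αx on ℝ. Run projected gradient descent on [−1,1] with step size η started at x_0 = 0 for T iterations. Then no projection is active, the iterates are x_t = −tηα for 0 ≤ t ≤ T, the averaged output is x^GD = −(T+1)ηα/2, and f(x^GD) − f(−1) = α − (T+1)ηα²/2 = 1/(2(T+1)η) ≥ 1/(4ηT). -/

import Mathlib

open scoped BigOperators

/-- Projected gradient descent on `[−1,1]` with step size `η` for the linear function
`f(x) = αx` (whose derivative is `α` everywhere), started at `0`. -/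
noncomputable def linSeq (η α : ℝ) : ℕ → ℝ
  | 0 => 0
  | t + 1 => max (-1) (min 1 (linSeq η α t - η * α))

/-- For `η > 0`, `T ≥ 1` with `(T+1)η ≥ 1` and `α = 1/((T+1)η)` (so
`0 < α ≤ 1`), GD on `f(x) = αx` over `[−1,1]` performs no projections, its iterates are
`x_t = −tηα` for `t ≤ T`, the averaged output is `x^GD = −(T+1)ηα/2`, and
`f(x^GD) − f(−1) = α − (T+1)ηα²/2 = 1/(2(T+1)η) ≥ 1/(4ηT)`. -/
theorem gd_linear_lower_bound (η : ℝ) (hη : 0 < η) (T : ℕ) (hT : 1 ≤ T)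
    (h1 : 1 ≤ ((T : ℝ) + 1) * η) (α : ℝ) (hα : α = 1 / (((T : ℝ) + 1) * η)) :
    (0 < α ∧ α ≤ 1) ∧
    (∀ t ≤ T, |linSeq η α t - η * α| ≤ 1) ∧
    (∀ t ≤ T, linSeq η α t = -(t : ℝ) * η * α) ∧
    (T : ℝ)⁻¹ * ∑ t ∈ Finset.Icc 1 T, linSeq η α t = -(((T : ℝ) + 1) * η * α / 2) ∧
    α * ((T : ℝ)⁻¹ * ∑ t ∈ Finset.Icc 1 T, linSeq η α t) - α * (-1) =
      α - ((T : ℝ) + 1) * η * α ^ 2 / 2 ∧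
    α - ((T : ℝ) + 1) * η * α ^ 2 / 2 = 1 / (2 * ((T : ℝ) + 1) * η) ∧
    1 / (4 * η * (T : ℝ)) ≤ 1 / (2 * ((T : ℝ) + 1) * η) := by
  have hT1 : (0:ℝ) < (T:ℝ) + 1 := by positivity
  have hTη : (0:ℝ) < ((T:ℝ) + 1) * η := by positivity
  have hαpos : 0 < α := by rw [hα]; positivity
  have hηα : η * α = 1 / ((T:ℝ) + 1) := by
    rw [hα]; field_simp
  -- iterates
  have hit : ∀ t ≤ T, linSeq η α t = -(t : ℝ) * η * α := by
    intro t ht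
    induction t with
    | zero => simp [linSeq]
    | succ n ih =>
      have hn : n ≤ T := Nat.le_of_succ_le ht
      rw [linSeq, ih hn]
      have hx : -(n:ℝ) * η * α - η * α = -((n:ℝ)+1) / ((T:ℝ)+1) := by
        rw [show -(n:ℝ) * η * α - η * α = (-((n:ℝ)+1)) * (η * α) from by ring, hηα]
        ring
      rw [hx]
      have hle : ((n:ℝ) + 1) ≤ (T:ℝ) + 1 := by
        have : (n:ℝ) ≤ (T:ℝ) := by exact_mod_cast hn
        linarith
      have hge : (-1 : ℝ) ≤ -((n:ℝ)+1) / ((T:ℝ)+1) := by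
        rw [neg_div, neg_le_neg_iff, div_le_one hT1]
        exact hle
      have hle1 : -((n:ℝ)+1) / ((T:ℝ)+1) ≤ 1 := by
        have h0 : (0:ℝ) ≤ (n:ℝ) := Nat.cast_nonneg n
        have : -((n:ℝ)+1) / ((T:ℝ)+1) ≤ 0 :=
          div_nonpos_of_nonpos_of_nonneg (by linarith) (by linarith)
        linarith
      rw [min_eq_right hle1, max_eq_right hge]
      rw [show -(((n:ℕ)+1:ℕ):ℝ) * η * α = (-(((n:ℕ)+1:ℕ):ℝ)) * (η * α) from by ring, hηα]
      push_cast; ring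
  have hg : (∑ t ∈ Finset.Icc 1 T, (t:ℝ)) = (T:ℝ) * ((T:ℝ)+1) / 2 := by
    have h2 : (∑ t ∈ Finset.Icc 1 T, t) * 2 = T * (T+1) := by
      clear hT h1 hα hT1 hTη hηα hit
      induction T with
      | zero => simp
      | succ n ih =>
        rw [Finset.sum_Icc_succ_top (Nat.one_le_iff_ne_zero.mpr (Nat.succ_ne_zero n)),
          add_mul, ih]
        ring
    have h3 : ((∑ t ∈ Finset.Icc 1 T, t : ℕ) : ℝ) * 2 = (T:ℝ) * ((T:ℝ)+1) := by
      exact_mod_cast congrArg (Nat.cast : ℕ → ℝ) h2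
    push_cast at h3
    linarith
  have hsum : ∑ t ∈ Finset.Icc 1 T, linSeq η α t = -(η * α) * ((T:ℝ) * ((T:ℝ)+1) / 2) := by
    have h3 : ∑ t ∈ Finset.Icc 1 T, linSeq η α t = ∑ t ∈ Finset.Icc 1 T, (-(t:ℝ) * η * α) := by
      apply Finset.sum_congr rfl
      intro t ht
      exact hit t (Finset.mem_Icc.mp ht).2
    rw [h3]
    calc ∑ t ∈ Finset.Icc 1 T, (-(t:ℝ) * η * α)
        = -(η*α) * ∑ t ∈ Finset.Icc 1 T, (t:ℝ) := by
          rw [Finset.mul_sum]; apply Finset.sum_congr rfl; intro t _; ring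
      _ = -(η * α) * ((T:ℝ) * ((T:ℝ)+1) / 2) := by rw [hg]
  have hTpos : (0:ℝ) < (T:ℝ) := by exact_mod_cast hT
  have havg : (T : ℝ)⁻¹ * ∑ t ∈ Finset.Icc 1 T, linSeq η α t = -(((T : ℝ) + 1) * η * α / 2) := by
    rw [hsum]; field_simp
  refine ⟨⟨hαpos, ?_⟩, ?_, hit, havg, ?_, ?_, ?_⟩
  · rw [hα]; rw [div_le_one hTη]; linarith
  · intro t ht
    rw [hit t ht]
    have hx : -(t:ℝ) * η * α - η * α = -((t:ℝ)+1) / ((T:ℝ)+1) := by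
      rw [show -(t:ℝ) * η * α - η * α = (-((t:ℝ)+1)) * (η * α) from by ring, hηα]
      ring
    rw [hx]
    have ht' : (t:ℝ) ≤ (T:ℝ) := by exact_mod_cast ht
    have h0 : (0:ℝ) ≤ (t:ℝ) := Nat.cast_nonneg t
    rw [abs_le]
    constructor
    · rw [neg_div, neg_le_neg_iff, div_le_one hT1]; linarith
    · have : -((t:ℝ)+1) / ((T:ℝ)+1) ≤ 0 :=
        div_nonpos_of_nonpos_of_nonneg (by linarith) (by linarith)
      linarith
  · rw [havg, hα]; field_simp; ring
  · rw [hα]; field_simp; ring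
  · have hT1' : (1:ℝ) ≤ (T:ℝ) := by exact_mod_cast hT
    rw [div_le_div_iff₀ (by positivity) (by positivity)]
    nlinarith [mul_nonneg hη.le (sub_nonneg.mpr hT1')]
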